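/- Let n ≥ 1 and suppose multiplication by n! is injective in the commutative group S. If A : Gⁿ → S is a symmetric n-additive function (G a commutative monoid) whose diagonalization A*(x) = A(x,…,x) vanishes identically, then A is identically zero. -/

import Mathlib

open Finset

private lemma neg_one_pow_sub_aux {n a : ℕ} (h : a ≤ n) :
    (-1 : ℤ) ^ (n - a) = (-1) ^ n * (-1) ^ a := by
  have : (-1 : ℤ) ^ n * (-1) ^ a = (-1) ^ (n + a) := by rw [pow_add]
  rw [this]
  have : n + a = (n - a) + 2 * a := by omega
  rw [this, pow_add, pow_mul]
  simp

theorem stmt_10 {G S : Type*} [AddCommMonoid G] [AddCommGroup S] (n : ℕ) (hn : 1 ≤ n)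
    (hinj : Function.Injective (fun s : S => n.factorial • s))
    (A : (Fin n → G) → S)
    (hadd : ∀ (x : Fin n → G) (i : Fin n) (a b : G),
      A (Function.update x i (a + b)) = A (Function.update x i a) + A (Function.update x i b))
    (hsym : ∀ (x : Fin n → G) (σ : Equiv.Perm (Fin n)), A (x ∘ σ) = A x)
    (hdiag : ∀ x : G, A (fun _ => x) = 0) :
    ∀ y : Fin n → G, A y = 0 := by
  classical
  have hzero : ∀ (x : Fin n → G) (i : Fin n), A (Function.update x i 0) = 0 := by
    intro x i
    have := hadd x i 0 0
    rw [add_zero] at this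
    exact (left_eq_add.mp this)
  have hsmul : ∀ (x : Fin n → G) (i : Fin n) (c : ℕ) (a : G),
      A (Function.update x i (c • a)) = c • A (Function.update x i a) := by
    intro x i c a
    induction c with
    | zero => simpa using hzero x i
    | succ k ih => rw [succ_nsmul, hadd, ih, succ_nsmul]
  let B : MultilinearMap ℕ (fun _ : Fin n => G) S :=
    { toFun := A
      map_update_add' := by
        intro inst m i a b
        rw [Subsingleton.elim inst (instDecidableEqFin n)]
        exact hadd m i a b
      map_update_smul' := by
        intro inst m i c a
        rw [Subsingleton.elim inst (instDecidableEqFin n)]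
        exact hsmul m i c a }
  intro y
  have hexp : ∀ T : Finset (Fin n),
      A (fun _ => ∑ i ∈ T, y i) = ∑ r ∈ Fintype.piFinset (fun _ : Fin n => T), A (y ∘ r) :=
    fun T => B.map_sum_finset (fun _ j => y j) (fun _ => T)
  -- the alternating sum vanishes by hdiag
  have hLHS : ∑ T : Finset (Fin n), ((-1 : ℤ) ^ (n - T.card)) • A (fun _ => ∑ i ∈ T, y i) = 0 := by
    simp [hdiag]
  -- inner combinatorial sum
  have hinner : ∀ r : Fin n → Fin n,
      (∑ T : Finset (Fin n), if (∀ i, r i ∈ T) then ((-1 : ℤ) ^ (n - T.card)) else 0)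
        = if Function.Surjective r then 1 else 0 := by
    intro r
    set R : Finset (Fin n) := Finset.image r Finset.univ with hR
    have hcond : ∀ T : Finset (Fin n), (∀ i, r i ∈ T) ↔ R ⊆ T := by
      intro T
      constructor
      · intro h x hx
        rcases Finset.mem_image.mp hx with ⟨i, _, rfl⟩
        exact h i
      · intro h i
        exact h (Finset.mem_image.mpr ⟨i, Finset.mem_univ i, rfl⟩)
    have hsurj : Function.Surjective r ↔ R = Finset.univ := by
      constructor
      · intro h
        apply Finset.eq_univ_of_forall
        intro x
        rcases h x with ⟨i, rfl⟩
        exact Finset.mem_image.mpr ⟨i, Finset.mem_univ i, rfl⟩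
      · intro h x
        have : x ∈ R := h ▸ Finset.mem_univ x
        rcases Finset.mem_image.mp this with ⟨i, _, rfl⟩
        exact ⟨i, rfl⟩
    simp only [hcond]
    rw [← Finset.sum_filter]
    by_cases hRu : R = Finset.univ
    · have : Finset.univ.filter (fun T : Finset (Fin n) => R ⊆ T) = {Finset.univ} := by
        ext T
        simp [hRu, Finset.univ_subset_iff, eq_comm]
      rw [this, Finset.sum_singleton, Finset.card_univ, Fintype.card_fin]
      simp [hsurj, hRu]
    · rw [if_neg (fun h => hRu (hsurj.mp h))]
      have hbij : ∑ T ∈ Finset.univ.filter (fun T : Finset (Fin n) => R ⊆ T),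
          ((-1 : ℤ) ^ (n - T.card))
          = ∑ U ∈ Rᶜ.powerset, ((-1 : ℤ) ^ (n - (R.card + U.card))) := by
        apply Finset.sum_nbij' (fun T => T \ R) (fun U => R ∪ U)
        · intro T hT
          simp only [Finset.mem_powerset]
          intro x hx
          simp only [Finset.mem_compl]
          exact fun h => (Finset.mem_sdiff.mp hx).2 h
        · intro U hU
          simp only [Finset.mem_filter, Finset.mem_univ, true_and]
          exact Finset.subset_union_left
        · intro T hT
          simp only [Finset.mem_filter, Finset.mem_univ, true_and] at hT
          exact Finset.union_sdiff_of_subset hT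
        · intro U hU
          simp only [Finset.mem_powerset] at hU
          rw [Finset.union_sdiff_cancel_left]
          rw [Finset.disjoint_left]
          intro a ha hU'
          exact (Finset.mem_compl.mp (hU hU')) ha
        · intro T hT
          simp only [Finset.mem_filter, Finset.mem_univ, true_and] at hT
          rw [Finset.card_sdiff_of_subset hT]
          have := Finset.card_le_card hT
          have hTn : T.card ≤ n := by
            simpa using Finset.card_le_card (Finset.subset_univ T)
          congr 1
          omega
      rw [hbij]
      have hterm : ∀ U ∈ Rᶜ.powerset,
          ((-1 : ℤ) ^ (n - (R.card + U.card)))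
            = ((-1 : ℤ) ^ (n + R.card)) * ((-1 : ℤ) ^ U.card) := by
        intro U hU
        simp only [Finset.mem_powerset] at hU
        have h1 : U.card ≤ Rᶜ.card := Finset.card_le_card hU
        have h2 : Rᶜ.card = n - R.card := by
          rw [Finset.card_compl]
          simp
        have h3 : R.card ≤ n := by
          simpa using Finset.card_le_card (Finset.subset_univ R)
        have h4 : R.card + U.card ≤ n := by omega
        rw [neg_one_pow_sub_aux h4, pow_add, pow_add]
        ring
      rw [Finset.sum_congr rfl hterm, ← Finset.mul_sum,
        Finset.sum_powerset_neg_one_pow_card_of_nonempty, mul_zero]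
      rw [Finset.nonempty_iff_ne_empty]
      intro h
      apply hRu
      exact (Finset.compl_eq_empty_iff R).mp h
  -- rewrite piFinset sums as filtered sums over all functions
  have hpi : ∀ T : Finset (Fin n),
      Fintype.piFinset (fun _ : Fin n => T)
        = Finset.univ.filter (fun r : Fin n → Fin n => ∀ i, r i ∈ T) := by
    intro T
    ext r
    simp [Fintype.mem_piFinset]
  -- main computation
  have hmain : ∑ T : Finset (Fin n), ((-1 : ℤ) ^ (n - T.card)) • A (fun _ => ∑ i ∈ T, y i)
      = ∑ r : Fin n → Fin n, (if Function.Surjective r then (1 : ℤ) else 0) • A (y ∘ r) := by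
    calc ∑ T : Finset (Fin n), ((-1 : ℤ) ^ (n - T.card)) • A (fun _ => ∑ i ∈ T, y i)
        = ∑ T : Finset (Fin n), ∑ r : Fin n → Fin n,
            (if (∀ i, r i ∈ T) then ((-1 : ℤ) ^ (n - T.card)) else 0) • A (y ∘ r) := by
          refine Finset.sum_congr rfl fun T _ => ?_
          rw [hexp T, hpi T, Finset.smul_sum, Finset.sum_filter]
          refine Finset.sum_congr rfl fun r _ => ?_
          split <;> simp
      _ = ∑ r : Fin n → Fin n, ∑ T : Finset (Fin n),
            (if (∀ i, r i ∈ T) then ((-1 : ℤ) ^ (n - T.card)) else 0) • A (y ∘ r) :=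
          Finset.sum_comm
      _ = ∑ r : Fin n → Fin n, (if Function.Surjective r then (1 : ℤ) else 0) • A (y ∘ r) := by
          refine Finset.sum_congr rfl fun r _ => ?_
          rw [← Finset.sum_smul, hinner r]
  -- sum over surjections = sum over permutations
  have hperm : ∑ r : Fin n → Fin n, (if Function.Surjective r then (1 : ℤ) else 0) • A (y ∘ r)
      = ∑ σ : Equiv.Perm (Fin n), A (y ∘ σ) := by
    simp only [ite_smul, one_smul, zero_smul]
    rw [← Finset.sum_filter]
    symm
    refine Finset.sum_bij (fun (σ : Equiv.Perm (Fin n)) _ => (σ : Fin n → Fin n)) ?_ ?_ ?_ ?_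
    · intro σ _
      simp only [Finset.mem_filter, Finset.mem_univ, true_and]
      exact σ.surjective
    · intro σ₁ _ σ₂ _ h
      exact Equiv.coe_fn_injective h
    · intro r hr
      simp only [Finset.mem_filter, Finset.mem_univ, true_and] at hr
      have hb : Function.Bijective r := Finite.surjective_iff_bijective.mp hr
      exact ⟨Equiv.ofBijective r hb, Finset.mem_univ _, rfl⟩
    · intro σ _
      rfl
  have hfin : (n.factorial : ℤ) • A y = 0 := by
    have h1 : ∑ σ : Equiv.Perm (Fin n), A (y ∘ σ) = 0 := by
      rw [← hperm, ← hmain, hLHS]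
    have h2 : ∑ σ : Equiv.Perm (Fin n), A (y ∘ σ)
        = (n.factorial : ℤ) • A y := by
      rw [Finset.sum_congr rfl (fun σ _ => hsym y σ), Finset.sum_const, Finset.card_univ,
        Fintype.card_perm, Fintype.card_fin]
      simp
    rw [← h2, h1]
  have hfin' : n.factorial • A y = n.factorial • (0 : S) := by
    rw [smul_zero]
    exact_mod_cast hfin
  exact hinj hfin'
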